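/- arXiv:2312.17299 — 7 statements merged into one kernel-verified Lean document; each statement's English description precedes it below -/
import Mathlib

section
/- Let R be a semiprime ring with finitely many minimal primes and whose centre Z(R) also has finitely many minimal primes. Then the following statements are equivalent: (1) C_{Z(R)} ⊆ C_R; (2) C_{Z(R)} ∩ 𝔭 = ∅ for all 𝔭 ∈ min(R); (3) the map ρ_{R,min} : min(R) → min(Z(R)), 𝔭 ↦ 𝔭 ∩ Z(R), is a well-defined map; (4) the map ρ_{R,min} is a well-defined surjection onto min(Z(R)). -/
/- Common framework: two-sided ideals, prime ideals, denominator sets and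
   left localizations of (possibly noncommutative) rings, described
   axiomatically via their characteristic properties. -/

namespace BavulaMinPrimes

/-- A subset of a ring is a two-sided ideal. -/
def IsIdealSet {R : Type*} [Ring R] (I : Set R) : Prop :=
  (0 : R) ∈ I ∧ (∀ a ∈ I, ∀ b ∈ I, a + b ∈ I) ∧ (∀ a ∈ I, -a ∈ I) ∧
    ∀ a ∈ I, ∀ r : R, r * a ∈ I ∧ a * r ∈ I

/-- A (two-sided) prime ideal: a proper ideal `P` such that `A * B ⊆ P`
implies `A ⊆ P` or `B ⊆ P` for all ideals `A`, `B`. -/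
def IsPrimeIdealSet {R : Type*} [Ring R] (P : Set R) : Prop :=
  IsIdealSet P ∧ P ≠ Set.univ ∧
    ∀ A B : Set R, IsIdealSet A → IsIdealSet B →
      (∀ a ∈ A, ∀ b ∈ B, a * b ∈ P) → A ⊆ P ∨ B ⊆ P

/-- A completely prime ideal: the factor ring is a domain. -/
def IsCompletelyPrimeIdealSet {R : Type*} [Ring R] (P : Set R) : Prop :=
  IsIdealSet P ∧ P ≠ Set.univ ∧ ∀ a b : R, a * b ∈ P → a ∈ P ∨ b ∈ P

/-- A minimal prime ideal of a ring. -/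
def IsMinimalPrimeIdealSet {R : Type*} [Ring R] (P : Set R) : Prop :=
  IsPrimeIdealSet P ∧ ∀ P' : Set R, IsPrimeIdealSet P' → P' ⊆ P → P' = P

/-- A prime minimal over an ideal `A`. -/
def IsMinimalPrimeOver {R : Type*} [Ring R] (A P : Set R) : Prop :=
  IsPrimeIdealSet P ∧ A ⊆ P ∧
    ∀ P' : Set R, IsPrimeIdealSet P' → A ⊆ P' → P' ⊆ P → P' = P

/-- The set `min(R)` of minimal primes of `R`. -/
def minPrimes (R : Type*) [Ring R] : Set (Set R) := { P | IsMinimalPrimeIdealSet P }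

/-- The prime radical: intersection of all prime ideals. -/
def primeRadicalSet (R : Type*) [Ring R] : Set R :=
  { r : R | ∀ P : Set R, IsPrimeIdealSet P → r ∈ P }

/-- A ring is semiprime if its prime radical is zero. -/
def IsSemiprimeRing (R : Type*) [Ring R] : Prop := primeRadicalSet R = {0}

/-- A ring is prime if its zero ideal is a prime ideal. -/
def IsPrimeRing (R : Type*) [Ring R] : Prop := IsPrimeIdealSet ({0} : Set R)

/-- A multiplicative subset: `1 ∈ S`, `0 ∉ S`, closed under multiplication. -/
def IsMulSet {R : Type*} [Ring R] (S : Set R) : Prop :=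
  (1 : R) ∈ S ∧ (0 : R) ∉ S ∧ ∀ s ∈ S, ∀ t ∈ S, s * t ∈ S

/-- The left Ore condition: `S r ∩ R s ≠ ∅`. -/
def LeftOre {R : Type*} [Ring R] (S : Set R) : Prop :=
  ∀ r : R, ∀ s ∈ S, ∃ s' ∈ S, ∃ r' : R, s' * r = r' * s

/-- The right Ore condition: `r S ∩ s R ≠ ∅`. -/
def RightOre {R : Type*} [Ring R] (S : Set R) : Prop :=
  ∀ r : R, ∀ s ∈ S, ∃ s' ∈ S, ∃ r' : R, r * s' = s * r'

/-- A left denominator set: a left Ore multiplicative set such that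
`r s = 0` (with `s ∈ S`) implies `t r = 0` for some `t ∈ S`. -/
def IsLeftDenominatorSet {R : Type*} [Ring R] (S : Set R) : Prop :=
  IsMulSet S ∧ LeftOre S ∧ ∀ r : R, ∀ s ∈ S, r * s = 0 → ∃ t ∈ S, t * r = 0

/-- A right denominator set. -/
def IsRightDenominatorSet {R : Type*} [Ring R] (S : Set R) : Prop :=
  IsMulSet S ∧ RightOre S ∧ ∀ r : R, ∀ s ∈ S, s * r = 0 → ∃ t ∈ S, r * t = 0

/-- `ass_l(S) = { r | s r = 0 for some s ∈ S }`. -/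
def lAss {R : Type*} [Ring R] (S : Set R) : Set R := { r : R | ∃ s ∈ S, s * r = 0 }

/-- `f : R →+* Q` realizes `Q` as the left localization `S⁻¹R`:
elements of `S` become units, every element of `Q` is a left fraction
`(f s)⁻¹ (f r)`, and the kernel of `f` is `ass_l(S)`.  These properties
characterize `S⁻¹R` up to a unique `R`-isomorphism. -/
structure IsLeftLocalization {R Q : Type*} [Ring R] [Ring Q]
    (S : Set R) (f : R →+* Q) : Prop where
  isUnit : ∀ s ∈ S, IsUnit (f s)
  surj : ∀ q : Q, ∃ s ∈ S, ∃ r : R, f s * q = f r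
  ker : ∀ r : R, f r = 0 ↔ r ∈ lAss S

/-- `S⁻¹I = { s⁻¹ a | s ∈ S, a ∈ I }` as a subset of the localization `Q`:
`q ∈ S⁻¹I` iff `f s * q = f a` for some `s ∈ S`, `a ∈ I`. -/
def locSet {R Q : Type*} [Ring R] [Ring Q] (f : R →+* Q) (S : Set R)
    (I : Set R) : Set Q :=
  { q : Q | ∃ s ∈ S, ∃ a ∈ I, f s * q = f a }

/-- A normal element: `R n = n R`. -/
def IsNormalElement {R : Type*} [Ring R] (n : R) : Prop :=
  (∀ r : R, ∃ r' : R, r * n = n * r') ∧ ∀ r : R, ∃ r' : R, n * r = r' * n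

/-- A prime rich ring: every ideal contains a finite product of prime ideals
containing it (the empty product being the whole ring). -/
def IsPrimeRich (R : Type*) [Ring R] : Prop :=
  ∀ A : Set R, IsIdealSet A →
    ∃ (n : ℕ) (P : Fin n → Set R),
      (∀ i, IsPrimeIdealSet (P i) ∧ A ⊆ P i) ∧
      ∀ x : Fin n → R, (∀ i, x i ∈ P i) → (List.ofFn x).prod ∈ A

/-- An ideal which is finitely generated as a right `R`-module. -/
def IsFGRightIdeal {R : Type*} [Ring R] (I : Set R) : Prop :=
  ∃ (m : ℕ) (g : Fin m → R), (∀ i, g i ∈ I) ∧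
    ∀ x ∈ I, ∃ c : Fin m → R, x = ∑ i, g i * c i

section Aux
variable {R : Type*} [Ring R]

lemma univ_isIdealSet : IsIdealSet (Set.univ : Set R) :=
  ⟨trivial, fun _ _ _ _ => trivial, fun _ _ => trivial, fun _ _ _ => ⟨trivial, trivial⟩⟩

lemma IsPrimeIdealSet.one_not_mem {P : Set R} (hP : IsPrimeIdealSet P) : (1 : R) ∉ P := by
  intro h1
  exact hP.2.1 (Set.eq_univ_of_forall fun r => by
    simpa using (hP.1.2.2.2 1 h1 r).1)

/-- `a` central: the set `aR` is a two-sided ideal. -/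
lemma central_range_ideal (a : R) (ha : ∀ g : R, g * a = a * g) :
    IsIdealSet (Set.range (fun x => a * x)) := by
  refine ⟨⟨0, by simp⟩, ?_, ?_, ?_⟩
  · rintro _ ⟨x, rfl⟩ _ ⟨y, rfl⟩; exact ⟨x + y, (mul_add a x y).symm ▸ rfl⟩
  · rintro _ ⟨x, rfl⟩; exact ⟨-x, by simp [mul_neg]⟩
  · rintro _ ⟨x, rfl⟩ r
    refine ⟨⟨r * x, ?_⟩, ⟨x * r, ?_⟩⟩
    · show a * (r * x) = r * (a * x)
      rw [← mul_assoc, ← ha r, mul_assoc]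
    · show a * (x * r) = a * x * r
      rw [mul_assoc]

/-- Central elements multiply into primes elementwise. -/
lemma central_mul_prime {P : Set R} (hP : IsPrimeIdealSet P) {a b : R}
    (ha : ∀ g : R, g * a = a * g) (hb : ∀ g : R, g * b = b * g)
    (hab : a * b ∈ P) : a ∈ P ∨ b ∈ P := by
  have h := hP.2.2 _ _ (central_range_ideal a ha) (central_range_ideal b hb) ?_
  · rcases h with h | h
    · exact Or.inl (h ⟨1, mul_one a⟩)
    · exact Or.inr (h ⟨1, mul_one b⟩)
  · rintro _ ⟨x, rfl⟩ _ ⟨y, rfl⟩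
    have : a * x * (b * y) = a * b * (x * y) := by
      rw [mul_assoc a x (b*y), ← mul_assoc x b y, hb x, mul_assoc b x y, ← mul_assoc]
    rw [this]
    exact (hP.1.2.2.2 _ hab (x * y)).2

/-- The intersection of a nonempty chain of primes is prime. -/
lemma chain_sInter_prime {c : Set (Set R)} (hc : IsChain (· ⊆ ·) c)
    (hne : c.Nonempty) (hp : ∀ P ∈ c, IsPrimeIdealSet P) :
    IsPrimeIdealSet (⋂₀ c) := by
  obtain ⟨P0, hP0⟩ := hne
  refine ⟨⟨?_, ?_, ?_, ?_⟩, ?_, ?_⟩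
  · exact fun P hPc => (hp P hPc).1.1
  · exact fun x hx y hy P hPc => (hp P hPc).1.2.1 x (hx P hPc) y (hy P hPc)
  · exact fun x hx P hPc => (hp P hPc).1.2.2.1 x (hx P hPc)
  · exact fun x hx r => ⟨fun P hPc => ((hp P hPc).1.2.2.2 x (hx P hPc) r).1,
      fun P hPc => ((hp P hPc).1.2.2.2 x (hx P hPc) r).2⟩
  · intro h
    have h1 : (1 : R) ∈ ⋂₀ c := by rw [h]; trivial
    exact (hp P0 hP0).one_not_mem (h1 P0 hP0)
  · intro A B hA hB hprod
    by_contra hcon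
    push_neg at hcon
    obtain ⟨h1, h2⟩ := hcon
    rw [Set.not_subset] at h1 h2
    obtain ⟨x, hxA, hx⟩ := h1
    obtain ⟨y, hyB, hy⟩ := h2
    rw [Set.mem_sInter] at hx hy
    push_neg at hx hy
    obtain ⟨P1, hP1c, hxP1⟩ := hx
    obtain ⟨P2, hP2c, hyP2⟩ := hy
    rcases hc.total hP1c hP2c with h12 | h21
    · rcases (hp P1 hP1c).2.2 A B hA hB
        (fun a haA b hbB => Set.sInter_subset_of_mem hP1c (hprod a haA b hbB)) with h | h
      · exact hxP1 (h hxA)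
      · exact hyP2 (h12 (h hyB))
    · rcases (hp P2 hP2c).2.2 A B hA hB
        (fun a haA b hbB => Set.sInter_subset_of_mem hP2c (hprod a haA b hbB)) with h | h
      · exact hxP1 (h21 (h hxA))
      · exact hyP2 (h hyB)

/-- Every prime contains a minimal prime. -/
lemma exists_minimal_prime_le {P : Set R} (hP : IsPrimeIdealSet P) :
    ∃ p, IsMinimalPrimeIdealSet p ∧ p ⊆ P := by
  obtain ⟨m, hmP, hm⟩ := zorn_superset_nonempty {Q | IsPrimeIdealSet Q ∧ Q ⊆ P}
    (fun c hcS hc hne => by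
      refine ⟨⋂₀ c, ⟨chain_sInter_prime hc hne (fun Q hQ => (hcS hQ).1), ?_⟩,
        fun s hs => Set.sInter_subset_of_mem hs⟩
      obtain ⟨Q0, hQ0⟩ := hne
      exact (Set.sInter_subset_of_mem hQ0).trans (hcS hQ0).2) P ⟨hP, Set.Subset.rfl⟩
  refine ⟨m, ⟨hm.prop.1, fun P' hP' hP'm => ?_⟩, hm.prop.2⟩
  exact Set.Subset.antisymm hP'm (hm.2 ⟨hP', hP'm.trans hm.prop.2⟩ hP'm)

/-- In a semiprime ring, the intersection of the minimal primes is zero. -/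
lemma eq_zero_of_mem_all_minPrimes (hR : IsSemiprimeRing R) {r : R}
    (h : ∀ p ∈ minPrimes R, r ∈ p) : r = 0 := by
  have : r ∈ primeRadicalSet R := by
    intro P hP
    obtain ⟨p, hp, hpP⟩ := exists_minimal_prime_le hP
    exact hpP (h p hp)
  rw [hR] at this
  exact this

lemma minPrime_zero_mem {p : Set R} (hp : p ∈ minPrimes R) : (0 : R) ∈ p := hp.1.1.1

/-- If a finite intersection of ideals is inside a prime, one of them is. -/
lemma finset_inter_subset_prime (F : Finset (Set R)) (hF : ∀ I ∈ F, IsIdealSet I)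
    {P : Set R} (hP : IsPrimeIdealSet P) (h : ∀ x : R, (∀ I ∈ F, x ∈ I) → x ∈ P) :
    ∃ I ∈ F, I ⊆ P := by
  classical
  induction F using Finset.induction_on with
  | empty => exact absurd (h 1 (by simp)) hP.one_not_mem
  | @insert A s hAs ih =>
    have hA : IsIdealSet A := hF A (Finset.mem_insert_self A s)
    have hB : IsIdealSet {x : R | ∀ I ∈ s, x ∈ I} := by
      refine ⟨fun I hI => (hF I (Finset.mem_insert_of_mem hI)).1,
        fun x hx y hy I hI => (hF I (Finset.mem_insert_of_mem hI)).2.1 x (hx I hI) y (hy I hI),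
        fun x hx I hI => (hF I (Finset.mem_insert_of_mem hI)).2.2.1 x (hx I hI),
        fun x hx r => ⟨fun I hI => ((hF I (Finset.mem_insert_of_mem hI)).2.2.2 x (hx I hI) r).1,
          fun I hI => ((hF I (Finset.mem_insert_of_mem hI)).2.2.2 x (hx I hI) r).2⟩⟩
    have hprod : ∀ a ∈ A, ∀ b ∈ {x : R | ∀ I ∈ s, x ∈ I}, a * b ∈ P := ?_
    · rcases hP.2.2 A {x : R | ∀ I ∈ s, x ∈ I} hA hB hprod with hc | hc
      · exact ⟨A, Finset.mem_insert_self A s, hc⟩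
      · obtain ⟨I, hI, hIP⟩ := ih (fun I hI => hF I (Finset.mem_insert_of_mem hI))
          (fun x hx => hc hx)
        exact ⟨I, Finset.mem_insert_of_mem hI, hIP⟩
    · intro a haA b hbB
      refine h (a * b) ?_
      intro I hI
      rcases Finset.mem_insert.mp hI with rfl | hI
      · exact (hA.2.2.2 a haA b).2
      · exact ((hF I (Finset.mem_insert_of_mem hI)).2.2.2 b (hbB I hI) a).1

end Aux



section Comm
variable {S : Type*} [CommRing S]

lemma comm_central (a : S) : ∀ g : S, g * a = a * g := fun g => mul_comm g a

lemma IsPrimeIdealSet.mem_or_mem' {q : Set S} (hq : IsPrimeIdealSet q) {a b : S}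
    (hab : a * b ∈ q) : a ∈ q ∨ b ∈ q :=
  central_mul_prime hq (comm_central a) (comm_central b) hab

lemma prime_of_mem_or_mem {q : Set S} (hq : IsIdealSet q) (h1 : (1 : S) ∉ q)
    (helt : ∀ a b : S, a * b ∈ q → a ∈ q ∨ b ∈ q) : IsPrimeIdealSet q := by
  refine ⟨hq, fun h => h1 (h ▸ trivial), ?_⟩
  intro A B hA hB hprod
  by_cases hAq : A ⊆ q
  · exact Or.inl hAq
  · rw [Set.not_subset] at hAq
    obtain ⟨a, haA, haq⟩ := hAq
    refine Or.inr fun b hbB => ?_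
    rcases helt a b (hprod a haA b hbB) with h | h
    · exact absurd h haq
    · exact h

def toIdeal (q : Set S) (hq : IsIdealSet q) : Ideal S where
  carrier := q
  add_mem' := fun {a b} ha hb => hq.2.1 a ha b hb
  zero_mem' := hq.1
  smul_mem' := fun c x hx => (hq.2.2.2 x hx c).1

lemma coe_span_eq {q : Set S} (hq : IsIdealSet q) : (Ideal.span q : Set S) = q := by
  refine Set.Subset.antisymm ?_ Ideal.subset_span
  intro x hx
  exact (Ideal.span_le (I := toIdeal q hq)).mpr (fun y hy => hy) hx

lemma span_isPrime {q : Set S} (hq : IsPrimeIdealSet q) : (Ideal.span q).IsPrime := by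
  have hco := coe_span_eq hq.1
  constructor
  · rw [Ideal.ne_top_iff_one]
    intro h
    exact hq.one_not_mem (by rw [← hco]; exact h)
  · intro x y hxy
    have hmem : x * y ∈ q := by rw [← hco]; exact hxy
    rcases hq.mem_or_mem' hmem with h | h
    · exact Or.inl (Ideal.subset_span h)
    · exact Or.inr (Ideal.subset_span h)

lemma coeIdeal_prime (J : Ideal S) (hJ : J.IsPrime) : IsPrimeIdealSet (J : Set S) :=
  prime_of_mem_or_mem
    ⟨J.zero_mem, fun a ha b hb => J.add_mem ha hb, fun a ha => J.neg_mem ha,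
      fun a ha r => ⟨J.mul_mem_left r ha, J.mul_mem_right r ha⟩⟩
    ((Ideal.ne_top_iff_one J).mp hJ.ne_top)
    (fun _ _ hab => hJ.mem_or_mem hab)

lemma eq_zero_of_pow_eq_zero (hsq : ∀ x : S, x * x = 0 → x = 0) :
    ∀ n : ℕ, ∀ x : S, x ^ n = 0 → x = 0 := by
  intro n
  induction n using Nat.strong_induction_on with
  | _ n ih =>
    match n with
    | 0 =>
      intro x hx
      have h1 : (1 : S) = 0 := by simpa using hx
      calc x = x * 1 := (mul_one x).symm
        _ = 0 := by rw [h1, mul_zero]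
    | 1 => intro x hx; simpa using hx
    | (k+2) =>
      intro x hx
      have hsqx : x ^ (k+1) * x ^ (k+1) = 0 := by
        have h2 : (k+1) + (k+1) = (k+2) + k := by ring
        rw [← pow_add, h2, pow_add, hx, zero_mul]
      exact ih (k+1) (by omega) x (hsq _ hsqx)

lemma exists_minPrime_not_mem (hsq : ∀ x : S, x * x = 0 → x = 0) {r : S} (hr : r ≠ 0) :
    ∃ q, IsMinimalPrimeIdealSet q ∧ r ∉ q := by
  have hn : ¬ IsNilpotent r := fun ⟨n, hn⟩ => hr (eq_zero_of_pow_eq_zero hsq n r hn)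
  rw [nilpotent_iff_mem_prime] at hn
  push_neg at hn
  obtain ⟨J, hJ, hrJ⟩ := hn
  obtain ⟨q, hq, hqJ⟩ := exists_minimal_prime_le (coeIdeal_prime J hJ)
  exact ⟨q, hq, fun h => hrJ (hqJ h)⟩

lemma subset_of_subset_union_primes {I : Set S} (hI : IsIdealSet I)
    (F : Finset (Set S)) (hF : ∀ q ∈ F, IsPrimeIdealSet q)
    (h : ∀ x ∈ I, ∃ q ∈ F, x ∈ q) : ∃ q ∈ F, I ⊆ q := by
  classical
  have hp : ∀ q ∈ F, q ≠ (∅ : Set S) → q ≠ (∅ : Set S) → (Ideal.span q).IsPrime :=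
    fun q hq _ _ => span_isPrime (hF q hq)
  have hsub : ((Ideal.span I : Ideal S) : Set S) ⊆
      ⋃ q ∈ ((F : Finset (Set S)) : Set (Set S)), ((Ideal.span q : Ideal S) : Set S) := by
    rw [coe_span_eq hI]
    intro x hx
    obtain ⟨q, hqF, hxq⟩ := h x hx
    exact Set.mem_biUnion (by exact_mod_cast hqF) (Ideal.subset_span hxq)
  obtain ⟨q, hqF, hle⟩ := (Ideal.subset_union_prime (s := F)
    (f := fun q => Ideal.span q) ∅ ∅ hp (I := Ideal.span I)).mp hsub
  refine ⟨q, hqF, ?_⟩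
  intro x hx
  have hxs : x ∈ Ideal.span q := hle (Ideal.subset_span hx)
  rwa [← SetLike.mem_coe, coe_span_eq (hF q hqF).1] at hxs

end Comm

section Center
variable {R : Type*} [Ring R]

lemma center_comm (z : Subring.center R) : ∀ g : R, g * (z : R) = (z : R) * g :=
  fun g => Subring.mem_center_iff.mp z.2 g

/-- The contraction of `p` to the centre. -/
def centerPull (p : Set R) : Set (Subring.center R) := {z | (z : R) ∈ p}

lemma centerPull_ideal {p : Set R} (hp : IsIdealSet p) : IsIdealSet (centerPull p) := by
  refine ⟨?_, ?_, ?_, ?_⟩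
  · show ((0 : Subring.center R) : R) ∈ p
    rw [ZeroMemClass.coe_zero]; exact hp.1
  · intro a ha b hb
    show ((a + b : Subring.center R) : R) ∈ p
    push_cast
    exact hp.2.1 _ ha _ hb
  · intro a ha
    show ((-a : Subring.center R) : R) ∈ p
    push_cast
    exact hp.2.2.1 _ ha
  · intro a ha r
    constructor
    · show ((r * a : Subring.center R) : R) ∈ p
      push_cast
      exact (hp.2.2.2 _ ha (r : R)).1
    · show ((a * r : Subring.center R) : R) ∈ p
      push_cast
      exact (hp.2.2.2 _ ha (r : R)).2

lemma centerPull_prime {p : Set R} (hp : IsPrimeIdealSet p) :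
    IsPrimeIdealSet (centerPull p) := by
  refine prime_of_mem_or_mem (centerPull_ideal hp.1) ?_ ?_
  · intro h
    have h' : ((1 : Subring.center R) : R) ∈ p := h
    rw [OneMemClass.coe_one] at h'
    exact hp.one_not_mem h'
  · intro a b hab
    have h' : (a : R) * (b : R) ∈ p := by
      have : ((a * b : Subring.center R) : R) ∈ p := hab
      push_cast at this
      exact this
    exact central_mul_prime hp (center_comm a) (center_comm b) h'

lemma center_sq_zero (hR : IsSemiprimeRing R) :
    ∀ z : Subring.center R, z * z = 0 → z = 0 := by
  intro z hz
  have hz' : (z : R) * (z : R) = 0 := by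
    have h := congrArg (Subtype.val) hz
    push_cast at h
    exact h
  have hrad : (z : R) ∈ primeRadicalSet R := by
    intro P hP
    have hA := central_range_ideal (z : R) (center_comm z)
    have hprod : ∀ a ∈ Set.range (fun x => (z : R) * x),
        ∀ b ∈ Set.range (fun x => (z : R) * x), a * b ∈ P := by
      rintro _ ⟨x, rfl⟩ _ ⟨y, rfl⟩
      show (z : R) * x * ((z : R) * y) ∈ P
      have h1 : x * ((z : R) * y) = (z : R) * (x * y) := by
        rw [← mul_assoc, center_comm z x, mul_assoc]
      rw [mul_assoc, h1, ← mul_assoc, hz', zero_mul]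
      exact hP.1.1
    rcases hP.2.2 _ _ hA hA hprod with h | h
    · exact h ⟨1, mul_one _⟩
    · exact h ⟨1, mul_one _⟩
  rw [hR] at hrad
  exact Subtype.ext (by simpa using hrad)

/-- The two-sided ideal generated by `r`. -/
def genIdeal (r : R) : Set R :=
  (AddSubgroup.closure (Set.range fun uv : R × R => uv.1 * r * uv.2) : Set R)

lemma self_mem_genIdeal (r : R) : r ∈ genIdeal r :=
  AddSubgroup.subset_closure ⟨(1, 1), by simp⟩

lemma genIdeal_isIdeal (r : R) : IsIdealSet (genIdeal r) := by
  refine ⟨AddSubgroup.zero_mem _, fun a ha b hb => AddSubgroup.add_mem _ ha hb,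
    fun a ha => AddSubgroup.neg_mem _ ha, ?_⟩
  intro a ha x
  constructor
  · refine AddSubgroup.closure_induction ?_ ?_ ?_ ?_ ha
    · rintro _ ⟨⟨u, v⟩, rfl⟩
      refine AddSubgroup.subset_closure ⟨(x * u, v), ?_⟩
      show x * u * r * v = x * (u * r * v)
      rw [mul_assoc, mul_assoc, mul_assoc]
    · rw [mul_zero]; exact AddSubgroup.zero_mem _
    · intro b c _ _ hb hc
      rw [mul_add]; exact AddSubgroup.add_mem _ hb hc
    · intro b _ hb
      rw [mul_neg]; exact AddSubgroup.neg_mem _ hb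
  · refine AddSubgroup.closure_induction ?_ ?_ ?_ ?_ ha
    · rintro _ ⟨⟨u, v⟩, rfl⟩
      refine AddSubgroup.subset_closure ⟨(u, v * x), ?_⟩
      show u * r * (v * x) = u * r * v * x
      rw [← mul_assoc (u * r) v x]
    · rw [zero_mul]; exact AddSubgroup.zero_mem _
    · intro b c _ _ hb hc
      rw [add_mul]; exact AddSubgroup.add_mem _ hb hc
    · intro b _ hb
      rw [neg_mul]; exact AddSubgroup.neg_mem _ hb

lemma genIdeal_left_ann {z r : R} (hz : ∀ g : R, g * z = z * g) (hzr : z * r = 0) :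
    ∀ b ∈ genIdeal r, z * b = 0 := by
  intro b hb
  refine AddSubgroup.closure_induction ?_ ?_ ?_ ?_ hb
  · rintro _ ⟨⟨u, v⟩, rfl⟩
    show z * (u * r * v) = 0
    rw [← mul_assoc, ← mul_assoc, ← hz u, mul_assoc u z r, hzr, mul_zero, zero_mul]
  · rw [mul_zero]
  · intro b c _ _ hb hc
    rw [mul_add, hb, hc, add_zero]
  · intro b _ hb
    rw [mul_neg, hb, neg_zero]

lemma genIdeal_right_ann {z r : R} (hz : ∀ g : R, g * z = z * g) (hrz : r * z = 0) :
    ∀ b ∈ genIdeal r, b * z = 0 := by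
  intro b hb
  refine AddSubgroup.closure_induction ?_ ?_ ?_ ?_ hb
  · rintro _ ⟨⟨u, v⟩, rfl⟩
    show u * r * v * z = 0
    rw [mul_assoc (u * r) v z, hz v, ← mul_assoc (u * r) z v, mul_assoc u r z, hrz,
      mul_zero, zero_mul]
  · rw [zero_mul]
  · intro b c _ _ hb hc
    rw [add_mul, hb, hc, add_zero]
  · intro b _ hb
    rw [neg_mul, hb, neg_zero]

end Center

section MainProof
variable {R : Type*} [Ring R]

lemma P2_of_P1 (hR : IsSemiprimeRing R) (hfin : (minPrimes R).Finite)
    (h1 : ∀ z : Subring.center R,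
      z ∈ nonZeroDivisors (Subring.center R) → IsRegular (z : R)) :
    ∀ p ∈ minPrimes R, ∀ z : Subring.center R,
      z ∈ nonZeroDivisors (Subring.center R) → (z : R) ∉ p := by
  classical
  intro p hp z hz hzp
  have hpm : IsMinimalPrimeIdealSet p := hp
  set F := hfin.toFinset.erase p with hF
  have hFid : ∀ I ∈ F, IsIdealSet I := fun I hI =>
    ((Set.Finite.mem_toFinset hfin).mp (Finset.mem_of_mem_erase hI)).1.1
  have hnot : ¬ ∀ x : R, (∀ I ∈ F, x ∈ I) → x ∈ p := by
    intro hall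
    obtain ⟨I, hIF, hIp⟩ := finset_inter_subset_prime F hFid hpm.1 hall
    have hImin : IsMinimalPrimeIdealSet I :=
      (Set.Finite.mem_toFinset hfin).mp (Finset.mem_of_mem_erase hIF)
    exact (Finset.ne_of_mem_erase hIF) (hpm.2 I hImin.1 hIp)
  push_neg at hnot
  obtain ⟨a, haF, hap⟩ := hnot
  have haz : a * (z : R) = 0 := by
    apply eq_zero_of_mem_all_minPrimes hR
    intro p' hp'
    by_cases hpp : p' = p
    · subst hpp
      exact (hp'.1.1.2.2.2 (z : R) hzp a).1
    · have hmem : p' ∈ F := Finset.mem_erase.mpr ⟨hpp, (Set.Finite.mem_toFinset hfin).mpr hp'⟩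
      exact (hp'.1.1.2.2.2 a (haF p' hmem) (z : R)).2
  have h0 : a = 0 := by
    have heq : a * (z : R) = 0 * (z : R) := by rw [haz, zero_mul]
    exact (h1 z hz).right heq
  exact hap (h0 ▸ hpm.1.1.1)

lemma P1_of_P2 (hR : IsSemiprimeRing R)
    (h2 : ∀ p ∈ minPrimes R, ∀ z : Subring.center R,
      z ∈ nonZeroDivisors (Subring.center R) → (z : R) ∉ p) :
    ∀ z : Subring.center R,
      z ∈ nonZeroDivisors (Subring.center R) → IsRegular (z : R) := by
  intro z hz
  have hzc := center_comm z
  have hl : ∀ r : R, (z : R) * r = 0 → r = 0 := by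
    intro r hzr
    apply eq_zero_of_mem_all_minPrimes hR
    intro p hp
    have hA := central_range_ideal (z : R) hzc
    have hB := genIdeal_isIdeal r
    have hprod : ∀ a ∈ Set.range (fun x => (z : R) * x), ∀ b ∈ genIdeal r, a * b ∈ p := by
      rintro _ ⟨x, rfl⟩ b hb
      show (z : R) * x * b ∈ p
      rw [mul_assoc, genIdeal_left_ann hzc hzr _ ((hB.2.2.2 b hb x).1)]
      exact hp.1.1.1
    rcases hp.1.2.2 _ _ hA hB hprod with h | h
    · exact absurd (h ⟨1, mul_one _⟩) (h2 p hp z hz)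
    · exact h (self_mem_genIdeal r)
  have hr : ∀ r : R, r * (z : R) = 0 → r = 0 := by
    intro r hrz
    apply eq_zero_of_mem_all_minPrimes hR
    intro p hp
    have hA := central_range_ideal (z : R) hzc
    have hB := genIdeal_isIdeal r
    have hprod : ∀ b ∈ genIdeal r, ∀ a ∈ Set.range (fun x => (z : R) * x), b * a ∈ p := by
      rintro b hb _ ⟨x, rfl⟩
      show b * ((z : R) * x) ∈ p
      rw [← mul_assoc, genIdeal_right_ann hzc hrz _ hb, zero_mul]
      exact hp.1.1.1
    rcases hp.1.2.2 _ _ hB hA hprod with h | h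
    · exact h (self_mem_genIdeal r)
    · exact absurd (h ⟨1, mul_one _⟩) (h2 p hp z hz)
  constructor
  · intro a b hab
    have hab' : (z : R) * a = (z : R) * b := hab
    have h0 : (z : R) * (a - b) = 0 := by rw [mul_sub, hab', sub_self]
    exact sub_eq_zero.mp (hl _ h0)
  · intro a b hab
    have hab' : a * (z : R) = b * (z : R) := hab
    have h0 : (a - b) * (z : R) = 0 := by rw [sub_mul, hab', sub_self]
    exact sub_eq_zero.mp (hr _ h0)

lemma P3_of_P2 (hR : IsSemiprimeRing R)
    (hfinZ : {q : Set (Subring.center R) | IsMinimalPrimeIdealSet q}.Finite)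
    (h2 : ∀ p ∈ minPrimes R, ∀ z : Subring.center R,
      z ∈ nonZeroDivisors (Subring.center R) → (z : R) ∉ p) :
    ∀ p ∈ minPrimes R, IsMinimalPrimeIdealSet (centerPull p) := by
  classical
  intro p hp
  have hpm : IsMinimalPrimeIdealSet p := hp
  have hsq := center_sq_zero (R := R) hR
  have hqp := centerPull_prime hpm.1
  set F := hfinZ.toFinset with hFdef
  have hF : ∀ q ∈ F, IsPrimeIdealSet q := fun q hq =>
    ((Set.Finite.mem_toFinset hfinZ).mp hq).1
  have hcover : ∀ x ∈ centerPull p, ∃ q ∈ F, x ∈ q := by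
    intro x hx
    have hxnd : x ∉ nonZeroDivisors (Subring.center R) := fun hnd => h2 p hp x hnd hx
    rw [mem_nonZeroDivisors_iff_right] at hxnd
    push_neg at hxnd
    obtain ⟨y, hyx, hy0⟩ := hxnd
    obtain ⟨qm, hqm, hyqm⟩ := exists_minPrime_not_mem hsq hy0
    have hyxq : y * x ∈ qm := by rw [hyx]; exact hqm.1.1.1
    rcases hqm.1.mem_or_mem' hyxq with h | h
    · exact absurd h hyqm
    · exact ⟨qm, (Set.Finite.mem_toFinset hfinZ).mpr hqm, h⟩
  obtain ⟨q, hqF, hsub⟩ := subset_of_subset_union_primes hqp.1 F hF hcover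
  have hqmin : IsMinimalPrimeIdealSet q := (Set.Finite.mem_toFinset hfinZ).mp hqF
  have heq : centerPull p = q := hqmin.2 _ hqp hsub
  rw [heq]
  exact hqmin

lemma P2_of_P3 (hR : IsSemiprimeRing R)
    (hfinZ : {q : Set (Subring.center R) | IsMinimalPrimeIdealSet q}.Finite)
    (h3 : ∀ p ∈ minPrimes R, IsMinimalPrimeIdealSet (centerPull p)) :
    ∀ p ∈ minPrimes R, ∀ z : Subring.center R,
      z ∈ nonZeroDivisors (Subring.center R) → (z : R) ∉ p := by
  classical
  intro p hp z hz hzp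
  have hsq := center_sq_zero (R := R) hR
  have hqp := h3 p hp
  set F := hfinZ.toFinset.erase (centerPull p) with hFdef
  have hFid : ∀ I ∈ F, IsIdealSet I := fun I hI =>
    ((Set.Finite.mem_toFinset hfinZ).mp (Finset.mem_of_mem_erase hI)).1.1
  have hnot : ¬ ∀ x : Subring.center R, (∀ I ∈ F, x ∈ I) → x ∈ centerPull p := by
    intro hall
    obtain ⟨I, hIF, hIsub⟩ := finset_inter_subset_prime F hFid hqp.1 hall
    have hImin : IsMinimalPrimeIdealSet I :=
      (Set.Finite.mem_toFinset hfinZ).mp (Finset.mem_of_mem_erase hIF)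
    exact Finset.ne_of_mem_erase hIF (hqp.2 I hImin.1 hIsub)
  push_neg at hnot
  obtain ⟨x, hxF, hxp⟩ := hnot
  have hzpull : z ∈ centerPull p := hzp
  have hall : ∀ qm : Set (Subring.center R), IsMinimalPrimeIdealSet qm → x * z ∈ qm := by
    intro qm hqm
    by_cases hqq : qm = centerPull p
    · subst hqq
      exact (hqm.1.1.2.2.2 z hzpull x).1
    · have hmem : qm ∈ F := Finset.mem_erase.mpr ⟨hqq, (Set.Finite.mem_toFinset hfinZ).mpr hqm⟩
      exact (hqm.1.1.2.2.2 x (hxF qm hmem) z).2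
  have hxz : x * z = 0 := by
    by_contra hne
    obtain ⟨qm, hqm, hmem⟩ := exists_minPrime_not_mem hsq hne
    exact hmem (hall qm hqm)
  have hx0 : x = 0 := (mem_nonZeroDivisors_iff_right.mp hz) x hxz
  exact hxp (hx0 ▸ hqp.1.1.1)

lemma P4_surj (hR : IsSemiprimeRing R) (hfin : (minPrimes R).Finite) :
    ∀ q : Set (Subring.center R), IsMinimalPrimeIdealSet q →
      ∃ p ∈ minPrimes R, centerPull p = q := by
  classical
  intro q hq
  set F := hfin.toFinset.image centerPull with hFdef
  have hFid : ∀ I ∈ F, IsIdealSet I := by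
    intro I hI
    obtain ⟨p, hp, rfl⟩ := Finset.mem_image.mp hI
    exact centerPull_ideal ((Set.Finite.mem_toFinset hfin).mp hp).1.1
  have hint : ∀ x : Subring.center R, (∀ I ∈ F, x ∈ I) → x ∈ q := by
    intro x hx
    have hx0 : (x : R) = 0 := by
      apply eq_zero_of_mem_all_minPrimes hR
      intro p hp
      exact hx (centerPull p)
        (Finset.mem_image_of_mem _ ((Set.Finite.mem_toFinset hfin).mpr hp))
    have hxz : x = 0 := Subtype.ext (by simpa using hx0)
    rw [hxz]
    exact hq.1.1.1
  obtain ⟨I, hIF, hIq⟩ := finset_inter_subset_prime F hFid hq.1 hint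
  obtain ⟨p, hp, rfl⟩ := Finset.mem_image.mp hIF
  have hpmin : IsMinimalPrimeIdealSet p := (Set.Finite.mem_toFinset hfin).mp hp
  exact ⟨p, hpmin, hq.2 _ (centerPull_prime hpmin.1) hIq⟩

end MainProof

/-- Let `R` be a semiprime ring such that both `R` and its
centre `Z(R)` have finitely many minimal primes.  TFAE:
(1) `C_{Z(R)} ⊆ C_R`; (2) `C_{Z(R)} ∩ 𝔭 = ∅` for all `𝔭 ∈ min(R)`;
(3) the map `ρ_{R,min} : min(R) → min(Z(R))`, `𝔭 ↦ 𝔭 ∩ Z(R)`, is well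
defined; (4) `ρ_{R,min}` is a well-defined surjection onto `min(Z(R))`. -/
theorem statement12 {R : Type*} [Ring R]
    (hR : IsSemiprimeRing R) (hfin : (minPrimes R).Finite)
    (hfinZ : {q : Set (Subring.center R) | IsMinimalPrimeIdealSet q}.Finite) :
    ((∀ z : Subring.center R,
        z ∈ nonZeroDivisors (Subring.center R) → IsRegular (z : R)) ↔
      ∀ p ∈ minPrimes R, ∀ z : Subring.center R,
        z ∈ nonZeroDivisors (Subring.center R) → (z : R) ∉ p) ∧
    ((∀ z : Subring.center R,
        z ∈ nonZeroDivisors (Subring.center R) → IsRegular (z : R)) ↔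
      ∀ p ∈ minPrimes R,
        IsMinimalPrimeIdealSet {z : Subring.center R | (z : R) ∈ p}) ∧
    ((∀ z : Subring.center R,
        z ∈ nonZeroDivisors (Subring.center R) → IsRegular (z : R)) ↔
      ((∀ p ∈ minPrimes R,
          IsMinimalPrimeIdealSet {z : Subring.center R | (z : R) ∈ p}) ∧
        ∀ q : Set (Subring.center R), IsMinimalPrimeIdealSet q →
          ∃ p ∈ minPrimes R, {z : Subring.center R | (z : R) ∈ p} = q)) := by
  refine ⟨⟨fun h1 => P2_of_P1 hR hfin h1, fun h2 => P1_of_P2 hR h2⟩,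
    ⟨fun h1 => P3_of_P2 hR hfinZ (P2_of_P1 hR hfin h1),
     fun h3 => P1_of_P2 hR (P2_of_P3 hR hfinZ h3)⟩,
    ⟨fun h1 => ⟨P3_of_P2 hR hfinZ (P2_of_P1 hR hfin h1), fun q hq => P4_surj hR hfin q hq⟩,
     fun h => P1_of_P2 hR (P2_of_P3 hR hfinZ h.1)⟩⟩

end BavulaMinPrimes
end

section
/- Let R be a ring, S ∈ Den_l(R, 𝔞) a left denominator set, and 𝔟 an ideal of R. Then the following statements are equivalent: (1) the left ideal S⁻¹𝔟 of the ring S⁻¹R is a two-sided ideal; (2) for all s ∈ S, 𝔟·s⁻¹ ⊆ S⁻¹𝔟; (3) if rs ∈ 𝔟 for some r ∈ R and s ∈ S, then s'r ∈ 𝔟 for some s' ∈ S; (4) if rs ∈ 𝔞 + 𝔟 for some r ∈ R and s ∈ S, then s'r ∈ 𝔞 + 𝔟 for some s' ∈ S; (5) for each s ∈ S, the ascending chain of left ideals 𝔟'_0 ⊆ 𝔟'_1 ⊆ ⋯ of S⁻¹R stabilizes, where 𝔟'_i := Σ_{j=0}^{i} S⁻¹𝔟·s^{-j}. -/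
/- Common framework: two-sided ideals, prime ideals, denominator sets and
   left localizations of (possibly noncommutative) rings, described
   axiomatically via their characteristic properties. -/

namespace BavulaMinPrimes

section Statement13Aux

variable {R Q : Type*} [Ring R] [Ring Q] {S : Set R} {f : R →+* Q} {b : Set R}

lemma mem_locSet_of_b (hS : IsLeftDenominatorSet S) {x : R} (hx : x ∈ b) :
    f x ∈ locSet f S b :=
  ⟨1, hS.1.1, x, hx, by simp⟩

lemma locSet_shift (hS : IsLeftDenominatorSet S) {s : R} (hs : s ∈ S) {q : Q}
    (h : f s * q ∈ locSet f S b) : q ∈ locSet f S b := by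
  obtain ⟨t, ht, a, ha, hE⟩ := h
  exact ⟨t * s, hS.1.2.2 t ht s hs, a, ha, by rw [map_mul, mul_assoc]; exact hE⟩

lemma locSet_zero (hS : IsLeftDenominatorSet S) (hb : IsIdealSet b) :
    (0 : Q) ∈ locSet f S b :=
  ⟨1, hS.1.1, 0, hb.1, by simp⟩

lemma locSet_add (hS : IsLeftDenominatorSet S) (hb : IsIdealSet b) {q₁ q₂ : Q}
    (h₁ : q₁ ∈ locSet f S b) (h₂ : q₂ ∈ locSet f S b) :
    q₁ + q₂ ∈ locSet f S b := by
  obtain ⟨s₁, hs₁, a₁, ha₁, e₁⟩ := h₁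
  obtain ⟨s₂, hs₂, a₂, ha₂, e₂⟩ := h₂
  obtain ⟨t, ht, r, hr⟩ := hS.2.1 s₁ s₂ hs₂
  refine ⟨t * s₁, hS.1.2.2 t ht s₁ hs₁, t * a₁ + r * a₂,
    hb.2.1 _ (hb.2.2.2 a₁ ha₁ t).1 _ (hb.2.2.2 a₂ ha₂ r).1, ?_⟩
  have h1 : f (t * s₁) * q₁ = f (t * a₁) := by
    rw [map_mul, map_mul, mul_assoc, e₁]
  have h2 : f (t * s₁) * q₂ = f (r * a₂) := by
    rw [hr, map_mul, map_mul, mul_assoc, e₂]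
  rw [mul_add, h1, h2, ← map_add]

lemma locSet_neg (hS : IsLeftDenominatorSet S) (hb : IsIdealSet b) {q : Q}
    (h : q ∈ locSet f S b) : -q ∈ locSet f S b := by
  obtain ⟨s, hs, a, ha, e⟩ := h
  exact ⟨s, hs, -a, hb.2.2.1 a ha, by rw [mul_neg, e, map_neg]⟩

lemma locSet_smul (hS : IsLeftDenominatorSet S) (hb : IsIdealSet b)
    (hf : IsLeftLocalization S f) {q : Q} (h : q ∈ locSet f S b) (p : Q) :
    p * q ∈ locSet f S b := by
  obtain ⟨s, hs, a, ha, e⟩ := h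
  obtain ⟨t, ht, r, hr⟩ := hf.surj p
  obtain ⟨s₁, hs₁, r₁, h₁⟩ := hS.2.1 r s hs
  refine ⟨s₁ * t, hS.1.2.2 s₁ hs₁ t ht, r₁ * a, (hb.2.2.2 a ha r₁).1, ?_⟩
  have key : f s₁ * (f t * p) * q = f (r₁ * a) := by
    rw [hr, ← map_mul, h₁, map_mul, mul_assoc, e, ← map_mul]
  calc f (s₁ * t) * (p * q) = f s₁ * (f t * p) * q := by
        rw [map_mul, mul_assoc, mul_assoc, mul_assoc]
    _ = f (r₁ * a) := key

lemma locSet_mul_f (hb : IsIdealSet b) {q : Q} (h : q ∈ locSet f S b) (r : R) :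
    q * f r ∈ locSet f S b := by
  obtain ⟨s, hs, a, ha, e⟩ := h
  exact ⟨s, hs, a * r, (hb.2.2.2 a ha r).2, by rw [← mul_assoc, e, ← map_mul]⟩

lemma locSet_sum (hS : IsLeftDenominatorSet S) (hb : IsIdealSet b) {k : ℕ}
    {g : ℕ → Q} (hg : ∀ j ∈ Finset.range k, g j ∈ locSet f S b) :
    ∑ j ∈ Finset.range k, g j ∈ locSet f S b :=
  Finset.sum_induction g (· ∈ locSet f S b)
    (fun _ _ ha hb' => locSet_add hS hb ha hb') (locSet_zero hS hb) hg

lemma ideal_imp_cond3 (hS : IsLeftDenominatorSet S) (hb : IsIdealSet b)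
    (hf : IsLeftLocalization S f) (hI : IsIdealSet (locSet f S b)) :
    ∀ r : R, ∀ s ∈ S, r * s ∈ b → ∃ s' ∈ S, s' * r ∈ b := by
  intro r s hs hrs
  obtain ⟨u, hu⟩ := hf.isUnit s hs
  have h3 : f r ∈ locSet f S b := by
    have h2 : f (r * s) * ↑u⁻¹ ∈ locSet f S b :=
      (hI.2.2.2 _ (mem_locSet_of_b hS hrs) _).2
    have : f (r * s) * ↑u⁻¹ = f r := by
      rw [map_mul, ← hu, mul_assoc, Units.mul_inv, mul_one]
    rwa [this] at h2
  obtain ⟨s₁, hs₁, a, ha, e⟩ := h3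
  have hker : s₁ * r - a ∈ lAss S := by
    rw [← hf.ker, map_sub, map_mul, e, sub_self]
  obtain ⟨t, ht, hta⟩ := hker
  refine ⟨t * s₁, hS.1.2.2 t ht s₁ hs₁, ?_⟩
  have : t * s₁ * r = t * a := by
    have := sub_eq_zero.mp (by rw [← mul_sub]; exact hta : t * (s₁ * r) - t * a = 0)
    rw [mul_assoc]; exact this
  rw [this]; exact (hb.2.2.2 a ha t).1

lemma cond3_imp_cond2 (hS : IsLeftDenominatorSet S) (hb : IsIdealSet b)
    (h3 : ∀ r : R, ∀ s ∈ S, r * s ∈ b → ∃ s' ∈ S, s' * r ∈ b) :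
    ∀ s ∈ S, ∀ y : Q, f s * y = 1 → y * f s = 1 →
      ∀ x ∈ b, f x * y ∈ locSet f S b := by
  intro s hs y hy1 _ x hx
  obtain ⟨s₁, hs₁, r₁, h₁⟩ := hS.2.1 x s hs
  have hrs : r₁ * s ∈ b := h₁ ▸ (hb.2.2.2 x hx s₁).1
  obtain ⟨s', hs', ha⟩ := h3 r₁ s hs hrs
  refine ⟨s' * s₁, hS.1.2.2 s' hs' s₁ hs₁, s' * r₁, ha, ?_⟩
  rw [map_mul, mul_assoc, ← mul_assoc (f s₁), ← map_mul, h₁, map_mul,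
    mul_assoc (f r₁), hy1, mul_one, ← map_mul]

lemma cond2_imp_ideal (hS : IsLeftDenominatorSet S) (hb : IsIdealSet b)
    (hf : IsLeftLocalization S f)
    (h2 : ∀ s ∈ S, ∀ y : Q, f s * y = 1 → y * f s = 1 →
      ∀ x ∈ b, f x * y ∈ locSet f S b) :
    IsIdealSet (locSet f S b) := by
  refine ⟨locSet_zero hS hb, fun a ha b' hb' => locSet_add hS hb ha hb',
    fun a ha => locSet_neg hS hb ha, fun q hq p => ⟨locSet_smul hS hb hf hq p, ?_⟩⟩
  obtain ⟨t, ht, r, hr⟩ := hf.surj p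
  obtain ⟨u, hu⟩ := hf.isUnit t ht
  set y : Q := ↑u⁻¹ with hy
  have hy1 : f t * y = 1 := by rw [← hu]; exact u.mul_inv
  have hy2 : y * f t = 1 := by rw [← hu]; exact u.inv_mul
  have hp : p = y * f r := by rw [← hr, ← mul_assoc, hy2, one_mul]
  have hqy : q * y ∈ locSet f S b := by
    obtain ⟨s, hs, a, ha, e⟩ := hq
    refine locSet_shift hS hs ?_
    rw [← mul_assoc, e]
    exact h2 t ht y hy1 hy2 a ha
  have : q * p = (q * y) * f r := by rw [hp, ← mul_assoc]
  rw [this]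
  exact locSet_mul_f hb hqy r

lemma cond3_iff_cond4 (hS : IsLeftDenominatorSet S) (hb : IsIdealSet b) :
    (∀ r : R, ∀ s ∈ S, r * s ∈ b → ∃ s' ∈ S, s' * r ∈ b) ↔
    (∀ r : R, ∀ s ∈ S, (∃ a ∈ lAss S, ∃ c ∈ b, r * s = a + c) →
      ∃ s' ∈ S, ∃ a ∈ lAss S, ∃ c ∈ b, s' * r = a + c) := by
  have h0 : (0 : R) ∈ lAss S := ⟨1, hS.1.1, mul_zero 1⟩
  constructor
  · rintro h3 r s hs ⟨a, haA, c, hc, heq⟩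
    obtain ⟨t, ht, hta⟩ := haA
    have h1 : (t * r) * s ∈ b := by
      have : (t * r) * s = t * c := by
        rw [mul_assoc, heq, mul_add, hta, zero_add]
      rw [this]; exact (hb.2.2.2 c hc t).1
    obtain ⟨s', hs', ha'⟩ := h3 (t * r) s hs h1
    exact ⟨s' * t, hS.1.2.2 s' hs' t ht, 0, h0, s' * (t * r), ha',
      by rw [mul_assoc, zero_add]⟩
  · intro h4 r s hs hrs
    obtain ⟨s', hs', a, haA, c, hc, heq⟩ :=
      h4 r s hs ⟨0, h0, r * s, hrs, (zero_add _).symm⟩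
    obtain ⟨t, ht, hta⟩ := haA
    refine ⟨t * s', hS.1.2.2 t ht s' hs', ?_⟩
    have : t * s' * r = t * c := by rw [mul_assoc, heq, mul_add, hta, zero_add]
    rw [this]; exact (hb.2.2.2 c hc t).1

lemma ideal_imp_cond5 (hS : IsLeftDenominatorSet S) (hb : IsIdealSet b)
    (hI : IsIdealSet (locSet f S b)) :
    ∀ s ∈ S, ∀ y : Q, f s * y = 1 → y * f s = 1 →
      ∃ n : ℕ, ∀ m : ℕ, n ≤ m →
        { q : Q | ∃ c : ℕ → Q, (∀ j, c j ∈ locSet f S b) ∧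
            q = ∑ j ∈ Finset.range (m + 1), c j * y ^ j } =
        { q : Q | ∃ c : ℕ → Q, (∀ j, c j ∈ locSet f S b) ∧
            q = ∑ j ∈ Finset.range (n + 1), c j * y ^ j } := by
  intro s hs y hy1 hy2
  have key : ∀ k : ℕ,
      { q : Q | ∃ c : ℕ → Q, (∀ j, c j ∈ locSet f S b) ∧
          q = ∑ j ∈ Finset.range (k + 1), c j * y ^ j } = locSet f S b := by
    intro k
    ext q
    constructor
    · rintro ⟨c, hc, rfl⟩
      exact locSet_sum hS hb (fun j _ => (hI.2.2.2 _ (hc j) _).2)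
    · intro hq
      refine ⟨fun j => if j = 0 then q else 0, ?_, ?_⟩
      · intro j
        by_cases h : j = 0
        · simpa [h] using hq
        · simpa [h] using locSet_zero hS hb (f := f) (b := b)
      · rw [Finset.sum_eq_single_of_mem 0
          (Finset.mem_range.mpr (Nat.succ_pos k)) (fun j _ hj => by simp [hj])]
        simp
  exact ⟨0, fun m _ => by rw [key m, key 0]⟩

lemma cond5_imp_cond2 (hS : IsLeftDenominatorSet S) (hb : IsIdealSet b)
    (h5 : ∀ s ∈ S, ∀ y : Q, f s * y = 1 → y * f s = 1 →
      ∃ n : ℕ, ∀ m : ℕ, n ≤ m →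
        { q : Q | ∃ c : ℕ → Q, (∀ j, c j ∈ locSet f S b) ∧
            q = ∑ j ∈ Finset.range (m + 1), c j * y ^ j } =
        { q : Q | ∃ c : ℕ → Q, (∀ j, c j ∈ locSet f S b) ∧
            q = ∑ j ∈ Finset.range (n + 1), c j * y ^ j }) :
    ∀ s ∈ S, ∀ y : Q, f s * y = 1 → y * f s = 1 →
      ∀ x ∈ b, f x * y ∈ locSet f S b := by
  intro s hs y hy1 hy2 x hx
  obtain ⟨n, hn⟩ := h5 s hs y hy1 hy2
  have hk : ∀ k : ℕ, y ^ k * (f s) ^ k = 1 := by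
    intro k
    induction k with
    | zero => simp
    | succ k ih =>
      rw [pow_succ, pow_succ', mul_assoc, ← mul_assoc y, hy2, one_mul, ih]
  have hmem : f x * y ^ (n + 1) ∈
      { q : Q | ∃ c : ℕ → Q, (∀ j, c j ∈ locSet f S b) ∧
          q = ∑ j ∈ Finset.range (n + 1 + 1), c j * y ^ j } := by
    refine ⟨fun j => if j = n + 1 then f x else 0, ?_, ?_⟩
    · intro j
      by_cases h : j = n + 1
      · simpa [h] using mem_locSet_of_b (f := f) hS hx
      · simpa [h] using locSet_zero hS hb (f := f) (b := b)
    · rw [Finset.sum_eq_single_of_mem (n + 1)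
        (Finset.mem_range.mpr (lt_add_one _)) (fun j _ hj => by simp [hj])]
      simp
  rw [hn (n + 1) (Nat.le_succ n)] at hmem
  obtain ⟨c, hc, heq⟩ := hmem
  have e1 : f x * y ^ (n + 1) * (f s) ^ n = f x * y := by
    rw [pow_succ', ← mul_assoc, mul_assoc (f x * y), hk n, mul_one]
  have e2 : f x * y = ∑ j ∈ Finset.range (n + 1), c j * y ^ j * (f s) ^ n := by
    rw [← e1, heq, Finset.sum_mul]
  rw [e2]
  refine locSet_sum hS hb ?_
  intro j hj
  have hj' : j ≤ n := Nat.lt_succ_iff.mp (Finset.mem_range.mp hj)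
  have hpow : y ^ j * (f s) ^ n = f (s ^ (n - j)) := by
    rw [map_pow]
    conv_lhs => rw [← Nat.add_sub_cancel' hj']
    rw [pow_add, ← mul_assoc, hk j, one_mul]
  rw [mul_assoc, hpow]
  exact locSet_mul_f hb (hc j) _

end Statement13Aux

/-- Let `S ∈ Den_l(R, 𝔞)` and `𝔟` an ideal of `R`.  TFAE:
(1) the left ideal `S⁻¹𝔟` of `S⁻¹R` is a two-sided ideal;
(2) `𝔟 s⁻¹ ⊆ S⁻¹𝔟` for all `s ∈ S`;
(3) `r s ∈ 𝔟` (with `s ∈ S`) implies `s' r ∈ 𝔟` for some `s' ∈ S`;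
(4) `r s ∈ 𝔞 + 𝔟` (with `s ∈ S`) implies `s' r ∈ 𝔞 + 𝔟` for some `s' ∈ S`;
(5) for each `s ∈ S`, the ascending chain of left ideals
`𝔟'_i = Σ_{j≤i} S⁻¹𝔟 s^{-j}` of `S⁻¹R` stabilizes. -/
theorem statement13 {R Q : Type*} [Ring R] [Ring Q]
    {S : Set R} (hS : IsLeftDenominatorSet S) {A : Set R} (hass : lAss S = A)
    (f : R →+* Q) (hf : IsLeftLocalization S f)
    {b : Set R} (hb : IsIdealSet b) :
    (IsIdealSet (locSet f S b) ↔
      ∀ s ∈ S, ∀ y : Q, f s * y = 1 → y * f s = 1 →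
        ∀ x ∈ b, f x * y ∈ locSet f S b) ∧
    (IsIdealSet (locSet f S b) ↔
      ∀ r : R, ∀ s ∈ S, r * s ∈ b → ∃ s' ∈ S, s' * r ∈ b) ∧
    (IsIdealSet (locSet f S b) ↔
      ∀ r : R, ∀ s ∈ S, (∃ a ∈ A, ∃ c ∈ b, r * s = a + c) →
        ∃ s' ∈ S, ∃ a ∈ A, ∃ c ∈ b, s' * r = a + c) ∧
    (IsIdealSet (locSet f S b) ↔
      ∀ s ∈ S, ∀ y : Q, f s * y = 1 → y * f s = 1 →
        ∃ n : ℕ, ∀ m : ℕ, n ≤ m →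
          { q : Q | ∃ c : ℕ → Q, (∀ j, c j ∈ locSet f S b) ∧
              q = ∑ j ∈ Finset.range (m + 1), c j * y ^ j } =
          { q : Q | ∃ c : ℕ → Q, (∀ j, c j ∈ locSet f S b) ∧
              q = ∑ j ∈ Finset.range (n + 1), c j * y ^ j }) := by
  subst hass
  have H13 := ideal_imp_cond3 hS hb hf
  have H32 := cond3_imp_cond2 (f := f) hS hb
  have H21 := cond2_imp_ideal hS hb hf
  have H34 := cond3_iff_cond4 hS hb
  refine ⟨⟨fun h1 => H32 (H13 h1), fun h2 => H21 h2⟩,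
    ⟨H13, fun h3 => H21 (H32 h3)⟩,
    ⟨fun h1 => H34.mp (H13 h1), fun h4 => H21 (H32 (H34.mpr h4))⟩,
    ⟨ideal_imp_cond5 hS hb, fun h5 => H21 (cond5_imp_cond2 hS hb h5)⟩⟩

end BavulaMinPrimes
end

section
/- Let R be a ring and S ∈ Den_l(R, 𝔮) a left denominator set such that 𝔮 = ass_l(S) is a prime ideal of R. Then the left localization S⁻¹R is a prime ring. -/
/- Common framework: two-sided ideals, prime ideals, denominator sets and
   left localizations of (possibly noncommutative) rings, described
   axiomatically via their characteristic properties. -/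

namespace BavulaMinPrimes

lemma preimage_idealSet {R Q : Type*} [Ring R] [Ring Q] (f : R →+* Q)
    {A : Set Q} (hA : IsIdealSet A) : IsIdealSet (f ⁻¹' A) := by
  obtain ⟨h0, hadd, hneg, hmul⟩ := hA
  refine ⟨by simpa [Set.mem_preimage] using h0, ?_, ?_, ?_⟩
  · intro a ha b hb
    simpa [Set.mem_preimage] using hadd _ ha _ hb
  · intro a ha
    simpa [Set.mem_preimage] using hneg _ ha
  · intro a ha r
    exact ⟨by simpa [Set.mem_preimage] using (hmul _ ha (f r)).1,
           by simpa [Set.mem_preimage] using (hmul _ ha (f r)).2⟩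

/-- If `S ∈ Den_l(R, 𝔮)` with `𝔮 = ass_l(S)` a prime ideal of
`R`, then the left localization `S⁻¹R` is a prime ring. -/
theorem statement14 {R Q : Type*} [Ring R] [Ring Q]
    {S : Set R} (hS : IsLeftDenominatorSet S)
    {q : Set R} (hq : IsPrimeIdealSet q) (hass : lAss S = q)
    (f : R →+* Q) (hf : IsLeftLocalization S f) :
    IsPrimeRing Q := by
  obtain ⟨hIq, hq_ne, hq_prime⟩ := hq
  refine ⟨⟨rfl, ?_, ?_, ?_⟩, ?_, ?_⟩
  · intro a ha b hb; simp_all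
  · intro a ha; simp_all
  · intro a ha r; simp_all
  · intro h
    have h1 : (1 : Q) ∈ ({0} : Set Q) := h ▸ Set.mem_univ 1
    have hone : (1 : R) ∈ q := by
      rw [← hass, ← hf.ker]
      simpa using h1
    apply hq_ne
    ext r
    simp only [Set.mem_univ, iff_true]
    simpa using (hIq.2.2.2 1 hone r).1
  · intro A B hA hB hAB
    have hprod : ∀ a ∈ (f ⁻¹' A), ∀ b ∈ (f ⁻¹' B), a * b ∈ q := by
      intro a ha b hb
      rw [← hass, ← hf.ker, map_mul]
      simpa using hAB (f a) ha (f b) hb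
    rcases hq_prime (f ⁻¹' A) (f ⁻¹' B) (preimage_idealSet f hA)
      (preimage_idealSet f hB) hprod with h | h
    · left
      intro α hα
      obtain ⟨s, hs, r, hr⟩ := hf.surj α
      have hfr : f r ∈ A := hr ▸ (hA.2.2.2 α hα (f s)).1
      have hr0 : f r = 0 := (hf.ker r).2 (hass ▸ h hfr)
      have : f s * α = f s * 0 := by rw [mul_zero]; exact hr.trans hr0
      exact (hf.isUnit s hs).mul_left_cancel this
    · right
      intro β hβ
      obtain ⟨s, hs, r, hr⟩ := hf.surj β
      have hfr : f r ∈ B := hr ▸ (hB.2.2.2 β hβ (f s)).1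
      have hr0 : f r = 0 := (hf.ker r).2 (hass ▸ h hfr)
      have : f s * β = f s * 0 := by rw [mul_zero]; exact hr.trans hr0
      exact (hf.isUnit s hs).mul_left_cancel this


end BavulaMinPrimes
end

section
/- Suppose that R is a ring, S ∈ Den_l(R, 𝔞) is a left denominator set, 𝔭 is a prime ideal of R with S ∩ 𝔭 = ∅, and the ideal σ_S⁻¹(S⁻¹𝔭) of R is finitely generated as a right R-module (e.g. R is right Noetherian). Then σ_S⁻¹(S⁻¹𝔭) = 𝔭. -/
/- Common framework: two-sided ideals, prime ideals, denominator sets and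
   left localizations of (possibly noncommutative) rings, described
   axiomatically via their characteristic properties. -/

namespace BavulaMinPrimes

/-- Let `S ∈ Den_l(R, 𝔞)`, `𝔭` a prime ideal of `R` with
`S ∩ 𝔭 = ∅`, and suppose the ideal `σ_S⁻¹(S⁻¹𝔭)` of `R` is finitely
generated as a right `R`-module.  Then `σ_S⁻¹(S⁻¹𝔭) = 𝔭`. -/
theorem statement16 {R Q : Type*} [Ring R] [Ring Q]
    {S : Set R} (hS : IsLeftDenominatorSet S) {A : Set R} (hass : lAss S = A)
    (f : R →+* Q) (hf : IsLeftLocalization S f)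
    {p : Set R} (hp : IsPrimeIdealSet p) (hdisj : S ∩ p = ∅)
    (hfg : IsFGRightIdeal (f ⁻¹' locSet f S p)) :
    f ⁻¹' locSet f S p = p := by
  obtain ⟨⟨h1S, h0S, hSS⟩, hOre, hreg⟩ := hS
  obtain ⟨⟨hp0, hpadd, hpneg, hpmul⟩, hpne, hpprime⟩ := hp
  set P : Set R := f ⁻¹' locSet f S p with hPdef
  -- membership characterization of P
  have hmem : ∀ r : R, r ∈ P ↔ ∃ s ∈ S, s * r ∈ p := by
    intro r
    constructor
    · rintro ⟨s, hs, a, ha, heq⟩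
      have hz : f (s * r - a) = 0 := by
        rw [map_sub, map_mul, heq, sub_self]
      rw [hf.ker] at hz
      obtain ⟨t, ht, htz⟩ := hz
      refine ⟨t * s, hSS t ht s hs, ?_⟩
      have h2 : t * s * r = t * a := by
        have := sub_eq_zero.mp (by rwa [mul_sub] at htz)
        rw [mul_assoc]; exact this
      rw [h2]; exact (hpmul a ha t).1
    · rintro ⟨s, hs, hsr⟩
      exact ⟨s, hs, s * r, hsr, by rw [map_mul]⟩
  -- common multiple of two elements of S
  have cm2 : ∀ s1 ∈ S, ∀ s2 ∈ S, ∃ t ∈ S, (∃ c, t = c * s1) ∧ ∃ d, t = d * s2 := by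
    intro s1 hs1 s2 hs2
    obtain ⟨s', hs', r', hr'⟩ := hOre s1 s2 hs2
    exact ⟨s' * s1, hSS s' hs' s1 hs1, ⟨s', rfl⟩, ⟨r', hr'⟩⟩
  -- common multiple of finitely many elements of S
  have cmn : ∀ (n : ℕ) (s : Fin n → R), (∀ i, s i ∈ S) →
      ∃ t ∈ S, ∀ i, ∃ c, t = c * s i := by
    intro n
    induction n with
    | zero => exact fun s _ => ⟨1, h1S, fun i => i.elim0⟩
    | succ n ih =>
      intro s hs
      obtain ⟨t, ht, hti⟩ := ih (fun i => s i.castSucc) (fun i => hs _)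
      obtain ⟨u, hu, ⟨c, hc⟩, ⟨d, hd⟩⟩ := cm2 t ht (s (Fin.last n)) (hs _)
      refine ⟨u, hu, fun i => ?_⟩
      induction i using Fin.lastCases with
      | last => exact ⟨d, hd⟩
      | cast j =>
        obtain ⟨e, he⟩ := hti j
        exact ⟨c * e, by rw [hc, he, mul_assoc]⟩
  -- p is closed under finite sums
  have hsum : ∀ (m : ℕ) (v : Fin m → R), (∀ i, v i ∈ p) → (∑ i, v i) ∈ p := by
    intro m
    induction m with
    | zero => intro v _; simpa using hp0
    | succ m ih =>
      intro v hv
      rw [Fin.sum_univ_succ]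
      exact hpadd _ (hv 0) _ (ih _ fun i => hv i.succ)
  -- p ⊆ P
  have hpP : p ⊆ P := fun r hr => (hmem r).2 ⟨1, h1S, by rwa [one_mul]⟩
  -- P is an ideal
  have hPideal : IsIdealSet P := by
    refine ⟨(hmem 0).2 ⟨1, h1S, by simpa using hp0⟩, ?_, ?_, ?_⟩
    · intro a ha b hb
      obtain ⟨s1, hs1, ha'⟩ := (hmem a).1 ha
      obtain ⟨s2, hs2, hb'⟩ := (hmem b).1 hb
      obtain ⟨t, ht, ⟨c, hc⟩, ⟨d, hd⟩⟩ := cm2 s1 hs1 s2 hs2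
      refine (hmem _).2 ⟨t, ht, ?_⟩
      rw [mul_add]
      refine hpadd _ ?_ _ ?_
      · rw [hc, mul_assoc]; exact (hpmul _ ha' c).1
      · rw [hd, mul_assoc]; exact (hpmul _ hb' d).1
    · intro a ha
      obtain ⟨s, hs, ha'⟩ := (hmem a).1 ha
      exact (hmem _).2 ⟨s, hs, by rw [mul_neg]; exact hpneg _ ha'⟩
    · intro a ha r
      obtain ⟨s, hs, ha'⟩ := (hmem a).1 ha
      constructor
      · obtain ⟨s', hs', r', hr'⟩ := hOre r s hs
        refine (hmem _).2 ⟨s', hs', ?_⟩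
        rw [← mul_assoc, hr', mul_assoc]
        exact (hpmul _ ha' r').1
      · exact (hmem _).2 ⟨s, hs, by rw [← mul_assoc]; exact (hpmul _ ha' r).2⟩
  -- from the finite generation, find t ∈ S with t * P ⊆ p
  obtain ⟨m, g, hg, hgen⟩ := hfg
  have hgw := fun i => (hmem (g i)).1 (hg i)
  choose sg hsgS hsgp using hgw
  obtain ⟨t, ht, htc⟩ := cmn m sg hsgS
  have htg : ∀ i, t * g i ∈ p := by
    intro i
    obtain ⟨c, hc⟩ := htc i
    rw [hc, mul_assoc]
    exact (hpmul _ (hsgp i) c).1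
  have htP : ∀ b ∈ P, t * b ∈ p := by
    intro b hb
    obtain ⟨c, hc⟩ := hgen b hb
    rw [hc, Finset.mul_sum]
    refine hsum m _ fun i => ?_
    rw [← mul_assoc]
    exact (hpmul _ (htg i) (c i)).2
  -- the ideal A' = {x | x * P ⊆ p}
  set A' : Set R := {x : R | ∀ b ∈ P, x * b ∈ p} with hA'def
  have hA'ideal : IsIdealSet A' := by
    refine ⟨fun b _ => by rw [zero_mul]; exact hp0, ?_, ?_, ?_⟩
    · intro a ha b hb c hc
      rw [add_mul]; exact hpadd _ (ha c hc) _ (hb c hc)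
    · intro a ha b hb
      rw [neg_mul]; exact hpneg _ (ha b hb)
    · intro a ha r
      constructor
      · intro b hb; rw [mul_assoc]; exact (hpmul _ (ha b hb) r).1
      · intro b hb; rw [mul_assoc]
        exact ha _ ((hPideal.2.2.2 b hb r).1)
  have := hpprime A' P hA'ideal hPideal (fun a ha b hb => ha b hb)
  rcases this with hA'p | hPp
  · exfalso
    have : t ∈ S ∩ p := ⟨ht, hA'p htP⟩
    rw [hdisj] at this
    exact this
  · exact Set.Subset.antisymm hPp hpP

end BavulaMinPrimes
end

section
/- (1) Suppose R is a ring such that 𝔭₁⋯𝔭ₙ = 0 for some prime ideals 𝔭₁, …, 𝔭ₙ of R. Then every minimal prime of R belongs to the set of minimal elements (with respect to inclusion) of {𝔭₁, …, 𝔭ₙ}; in particular |min(R)| ≤ n < ∞. (2) Every ideal of a prime rich ring has only finitely many minimal primes over it. -/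
/- Common framework: two-sided ideals, prime ideals, denominator sets and
   left localizations of (possibly noncommutative) rings, described
   axiomatically via their characteristic properties. -/

namespace BavulaMinPrimes

private lemma keyLemma {R : Type*} [Ring R] :
    ∀ n : ℕ, 1 ≤ n → ∀ P : Fin n → Set R, (∀ i, IsIdealSet (P i)) →
    ∀ p : Set R, IsPrimeIdealSet p →
    (∀ x : Fin n → R, (∀ i, x i ∈ P i) → (List.ofFn x).prod ∈ p) →
    ∃ i, P i ⊆ p := by
  intro n
  induction n with
  | zero => omega
  | succ n ih =>
    intro _ P hP p hp hprod
    rcases Nat.eq_zero_or_pos n with rfl | hn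
    · refine ⟨0, fun a ha => ?_⟩
      have := hprod (fun _ => a) (fun i => by
        have hi0 : i = 0 := Fin.eq_zero i
        simpa [hi0] using ha)
      simpa using this
    · set B : Set R := {b | ∀ a ∈ P 0, a * b ∈ p} with hBdef
      have hpI := hp.1
      have hBideal : IsIdealSet B := by
        refine ⟨?_, ?_, ?_, ?_⟩
        · intro a ha; simpa using hpI.1
        · intro b hb c hc a ha
          have := hpI.2.1 _ (hb a ha) _ (hc a ha)
          simpa [mul_add] using this
        · intro b hb a ha
          have := hpI.2.2.1 _ (hb a ha)
          simpa [mul_neg] using this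
        · intro b hb r
          constructor
          · intro a ha
            have har : a * r ∈ P 0 := (hP 0).2.2.2 a ha r |>.2
            have := hb (a * r) har
            simpa [mul_assoc] using this
          · intro a ha
            have := (hpI.2.2.2 _ (hb a ha) r).2
            simpa [mul_assoc] using this
      rcases hp.2.2 (P 0) B (hP 0) hBideal (fun a ha b hb => hb a ha) with h | h
      · exact ⟨0, h⟩
      · have hprods : ∀ x : Fin n → R, (∀ i, x i ∈ P i.succ) → (List.ofFn x).prod ∈ p := by
          intro x hx
          apply h
          intro a ha
          have hmem : ∀ i, (Fin.cons a x : Fin (n+1) → R) i ∈ P i := by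
            intro i
            refine Fin.cases ?_ ?_ i
            · simpa using ha
            · intro j; simpa using hx j
          have := hprod (Fin.cons a x) hmem
          simpa [List.ofFn_succ, Fin.cons_succ] using this
        obtain ⟨i, hi⟩ := ih hn (fun i => P i.succ) (fun i => hP i.succ) p hp hprods
        exact ⟨i.succ, hi⟩

private lemma ideal_univ_of_one_mem {R : Type*} [Ring R] {A : Set R} (hA : IsIdealSet A)
    (h1 : (1:R) ∈ A) : A = Set.univ := by
  ext r
  simp only [Set.mem_univ, iff_true]
  have := (hA.2.2.2 1 h1 r).1
  simpa using this

/-- (1) If `𝔭₁ ⋯ 𝔭ₙ = 0` for prime ideals `𝔭₁, …, 𝔭ₙ` of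
`R`, then every minimal prime of `R` is a minimal element of
`{𝔭₁, …, 𝔭ₙ}`; in particular `|min(R)| ≤ n < ∞`.  (2) Every ideal of a
prime rich ring has only finitely many minimal primes over it. -/
theorem statement17 {R : Type*} [Ring R] :
    (∀ n : ℕ, 1 ≤ n → ∀ P : Fin n → Set R, (∀ i, IsPrimeIdealSet (P i)) →
      (∀ x : Fin n → R, (∀ i, x i ∈ P i) → (List.ofFn x).prod = 0) →
      (∀ p : Set R, IsMinimalPrimeIdealSet p →
        ∃ i, p = P i ∧ ∀ j, P j ⊆ P i → P j = P i) ∧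
      (minPrimes R).Finite ∧ (minPrimes R).ncard ≤ n) ∧
    (IsPrimeRich R → ∀ A : Set R, IsIdealSet A →
      {P : Set R | IsMinimalPrimeOver A P}.Finite) := by
  classical
  constructor
  · intro n hn P hP hprod
    have hzero : ∀ x : Fin n → R, (∀ i, x i ∈ P i) → ∀ p : Set R, IsPrimeIdealSet p →
        (List.ofFn x).prod ∈ p := by
      intro x hx p hp
      rw [hprod x hx]
      exact hp.1.1
    have hmin : ∀ p : Set R, IsMinimalPrimeIdealSet p →
        ∃ i, p = P i ∧ ∀ j, P j ⊆ P i → P j = P i := by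
      intro p hpmin
      obtain ⟨i, hi⟩ := keyLemma n hn P (fun i => (hP i).1) p hpmin.1
        (fun x hx => hzero x hx p hpmin.1)
      have hpeq : P i = p := hpmin.2 (P i) (hP i) hi
      refine ⟨i, hpeq.symm, ?_⟩
      intro j hj
      rw [hpeq] at hj ⊢
      exact hpmin.2 (P j) (hP j) hj
    have hsub : minPrimes R ⊆ Set.range P := by
      intro p hp
      obtain ⟨i, hi, -⟩ := hmin p hp
      exact ⟨i, hi.symm⟩
    have hfin : (minPrimes R).Finite := (Set.finite_range P).subset hsub
    refine ⟨hmin, hfin, ?_⟩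
    calc (minPrimes R).ncard ≤ (Set.range P).ncard :=
          Set.ncard_le_ncard hsub (Set.finite_range P)
      _ = (Finset.univ.image P).card := by
          rw [← Set.ncard_coe_finset]; congr 1; ext x; simp
      _ ≤ (Finset.univ : Finset (Fin n)).card := Finset.card_image_le
      _ = n := by simp
  · intro hrich A hA
    obtain ⟨n, P, h1, h2⟩ := hrich A hA
    rcases Nat.eq_zero_or_pos n with rfl | hn
    · have h1A : (1 : R) ∈ A := by
        have := h2 (fun i => i.elim0) (fun i => i.elim0)
        simpa using this
      have : {P : Set R | IsMinimalPrimeOver A P} = ∅ := by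
        ext Q
        simp only [Set.mem_setOf_eq, Set.mem_empty_iff_false, iff_false]
        intro hQ
        exact hQ.1.2.1 (ideal_univ_of_one_mem hQ.1.1 (hQ.2.1 h1A))
      rw [this]; exact Set.finite_empty
    · refine (Set.finite_range P).subset ?_
      intro Q hQ
      obtain ⟨i, hi⟩ := keyLemma n hn P (fun i => (h1 i).1.1) Q hQ.1
        (fun x hx => hQ.2.1 (h2 x hx))
      exact ⟨i, hQ.2.2 (P i) (h1 i).1 (h1 i).2 hi⟩


end BavulaMinPrimes
end

section
/- Let R be a ring and S ∈ Den_l(R, 𝔞) a left denominator set. If the ring S⁻¹R is left Noetherian (e.g. R is left Noetherian), then S respects the ideal structure of R: for every ideal 𝔟 of R, the left ideal S⁻¹𝔟 of S⁻¹R is a two-sided ideal. -/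
/- Common framework: two-sided ideals, prime ideals, denominator sets and
   left localizations of (possibly noncommutative) rings, described
   axiomatically via their characteristic properties. -/

namespace BavulaMinPrimes

private def rmulL {Q : Type*} [Ring Q] (v : Q) : Q →ₗ[Q] Q where
  toFun x := x * v
  map_add' a b := add_mul a b v
  map_smul' c x := by simp [smul_eq_mul, mul_assoc]

private lemma noeth_inv {Q : Type*} [Ring Q] [IsNoetherianRing Q]
    (J : Ideal Q) (u : Qˣ) (h : ∀ q ∈ J, q * (u : Q) ∈ J) :
    ∀ q ∈ J, q * ((u⁻¹ : Qˣ) : Q) ∈ J := by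
  set v : Q := ((u⁻¹ : Qˣ) : Q) with hv
  have huv : ∀ x : Q, x * (u : Q) * v = x := fun x => by
    rw [mul_assoc, hv]; simp
  have hstep : ∀ n, Submodule.map (rmulL (v ^ n)) J ≤
      Submodule.map (rmulL (v ^ (n + 1))) J := by
    intro n x hx
    obtain ⟨p, hp, rfl⟩ := Submodule.mem_map.mp hx
    refine Submodule.mem_map.mpr ⟨p * u, h p hp, ?_⟩
    show (p * u) * v ^ (n + 1) = rmulL (v ^ n) p
    have e : (p * u) * v ^ (n + 1) = (p * u * v) * v ^ n := by
      rw [pow_succ', ← mul_assoc]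
    rw [e, huv]; rfl
  obtain ⟨n, hn⟩ := monotone_stabilizes_iff_noetherian.mpr inferInstance
    ⟨fun n => Submodule.map (rmulL (v ^ n)) J, monotone_nat_of_le_succ hstep⟩
  have heq : Submodule.map (rmulL (v ^ n)) J =
      Submodule.map (rmulL (v ^ (n + 1))) J := hn (n + 1) (Nat.le_succ n)
  have hvu : v ^ n * (u : Q) ^ n = 1 := by
    rw [hv, ← Units.val_pow_eq_pow_val, ← Units.val_pow_eq_pow_val, ← Units.val_mul,
      inv_pow, inv_mul_cancel, Units.val_one]
  intro q hq
  have h1 : (q * v) * v ^ n ∈ Submodule.map (rmulL (v ^ (n + 1))) J :=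
    Submodule.mem_map.mpr ⟨q, hq, by
      show q * v ^ (n + 1) = (q * v) * v ^ n
      rw [pow_succ', ← mul_assoc]⟩
  rw [← heq] at h1
  obtain ⟨p, hp, hpe⟩ := Submodule.mem_map.mp h1
  have hpe' : p * v ^ n = (q * v) * v ^ n := hpe
  have hfin : p = q * v := by
    have h2 := congrArg (· * ((u : Q) ^ n)) hpe'
    simpa [mul_assoc, hvu] using h2
  rwa [← hfin]

/-- Let `S ∈ Den_l(R, 𝔞)`.  If the ring `S⁻¹R` is left
Noetherian, then `S` respects the ideal structure of `R`: for every ideal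
`𝔟` of `R`, the left ideal `S⁻¹𝔟` of `S⁻¹R` is a two-sided ideal. -/
theorem statement18 {R Q : Type*} [Ring R] [Ring Q]
    {S : Set R} (hS : IsLeftDenominatorSet S) {A : Set R} (hass : lAss S = A)
    (f : R →+* Q) (hf : IsLeftLocalization S f)
    [IsNoetherianRing Q] :
    ∀ b : Set R, IsIdealSet b → IsIdealSet (locSet f S b) := by
  intro b hb
  obtain ⟨⟨h1S, h0S, hmulS⟩, hOre, hreg⟩ := hS
  obtain ⟨hb0, hbadd, hbneg, hbmul⟩ := hb
  have hzero : (0 : Q) ∈ locSet f S b := ⟨1, h1S, 0, hb0, by simp⟩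
  have hrmulR : ∀ q ∈ locSet f S b, ∀ r : R, q * f r ∈ locSet f S b := by
    rintro q ⟨s, hs, a, ha, hq⟩ r
    exact ⟨s, hs, a * r, (hbmul a ha r).2, by rw [← mul_assoc, hq, ← map_mul]⟩
  have hlmulR : ∀ q ∈ locSet f S b, ∀ r : R, f r * q ∈ locSet f S b := by
    rintro q ⟨s, hs, a, ha, hq⟩ r
    obtain ⟨s', hs', r', heq⟩ := hOre r s hs
    refine ⟨s', hs', r' * a, (hbmul a ha r').1, ?_⟩
    calc f s' * (f r * q) = f (s' * r) * q := by rw [map_mul, mul_assoc]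
      _ = f (r' * s) * q := by rw [heq]
      _ = f r' * (f s * q) := by rw [map_mul, mul_assoc]
      _ = f (r' * a) := by rw [hq, ← map_mul]
  have hlmul : ∀ x : Q, ∀ q ∈ locSet f S b, x * q ∈ locSet f S b := by
    intro x q hq
    obtain ⟨t, ht, r, hxr⟩ := hf.surj x
    obtain ⟨s₁, hs₁, r₁, h1⟩ := hOre 1 t ht
    have hs1 : f s₁ = f r₁ * f t := by
      rw [← map_mul]; congr 1; simpa using h1
    have key : f s₁ * (x * q) = f (r₁ * r) * q := by
      calc f s₁ * (x * q) = f r₁ * (f t * x * q) := by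
            rw [hs1, mul_assoc, mul_assoc]
        _ = f (r₁ * r) * q := by rw [hxr, map_mul, mul_assoc]
    obtain ⟨s₂, hs₂, a₂, ha₂, h2⟩ := hlmulR q hq (r₁ * r)
    exact ⟨s₂ * s₁, hmulS _ hs₂ _ hs₁, a₂, ha₂, by
      rw [map_mul, mul_assoc, key, h2]⟩
  have hadd : ∀ q₁ ∈ locSet f S b, ∀ q₂ ∈ locSet f S b,
      q₁ + q₂ ∈ locSet f S b := by
    rintro q₁ ⟨s₁, hs₁, a₁, ha₁, h1⟩ q₂ ⟨s₂, hs₂, a₂, ha₂, h2⟩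
    obtain ⟨s', hs', r', heq⟩ := hOre s₁ s₂ hs₂
    refine ⟨s' * s₁, hmulS _ hs' _ hs₁,
      s' * a₁ + r' * a₂, hbadd _ (hbmul a₁ ha₁ s').1 _ (hbmul a₂ ha₂ r').1, ?_⟩
    have e1 : f (s' * s₁) * q₁ = f (s' * a₁) := by
      rw [map_mul, mul_assoc, h1, ← map_mul]
    have e2 : f (s' * s₁) * q₂ = f (r' * a₂) := by
      rw [heq, map_mul, mul_assoc, h2, ← map_mul]
    rw [mul_add, e1, e2, map_add]
  have hneg : ∀ q ∈ locSet f S b, -q ∈ locSet f S b := by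
    rintro q ⟨s, hs, a, ha, hq⟩
    exact ⟨s, hs, -a, hbneg a ha, by rw [mul_neg, hq, ← map_neg]⟩
  refine ⟨hzero, hadd, hneg, fun q hq x => ⟨hlmul x q hq, ?_⟩⟩
  -- right multiplication, using Noetherianity
  let J : Ideal Q :=
    { carrier := locSet f S b
      add_mem' := fun {p₁ p₂} hp₁ hp₂ => hadd p₁ hp₁ p₂ hp₂
      zero_mem' := hzero
      smul_mem' := fun c {p} hp => hlmul c p hp }
  obtain ⟨t, ht, r, hxr⟩ := hf.surj x
  have hu := hf.isUnit t ht
  have hJinv := noeth_inv J hu.unit (fun p hp => by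
    show p * (hu.unit : Q) ∈ locSet f S b
    rw [hu.unit_spec]
    exact hrmulR p hp t)
  have hx : x = ((hu.unit⁻¹ : Qˣ) : Q) * f r := by
    have h1 : (hu.unit : Q) * x = f r := by rw [hu.unit_spec]; exact hxr
    rw [← h1, ← mul_assoc, Units.inv_mul, one_mul]
  have hmem : q * ((hu.unit⁻¹ : Qˣ) : Q) ∈ locSet f S b := hJinv q hq
  rw [hx, ← mul_assoc]
  exact hrmulR _ hmem r

end BavulaMinPrimes
end

section
/- Let R be a semiprime ring with finitely many minimal primes. Then the set min(R) of minimal primes of R is the only irredundant set consisting of prime ideals of R; that is, if Q is a finite set of prime ideals of R with ⋂_{𝔮 ∈ Q} 𝔮 = 0 and ⋂_{𝔮 ∈ Q∖{𝔮'}} 𝔮 ≠ 0 for every 𝔮' ∈ Q, then Q = min(R). -/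
/- Common framework: two-sided ideals, prime ideals, denominator sets and
   left localizations of (possibly noncommutative) rings, described
   axiomatically via their characteristic properties. -/

namespace BavulaMinPrimes

lemma inter_isIdealSet {R : Type*} [Ring R] (Q : Set (Set R))
    (h : ∀ q ∈ Q, IsIdealSet q) : IsIdealSet {r : R | ∀ q ∈ Q, r ∈ q} := by
  refine ⟨fun q hq => (h q hq).1, fun a ha b hb q hq => (h q hq).2.1 a (ha q hq) b (hb q hq),
    fun a ha q hq => (h q hq).2.2.1 a (ha q hq), fun a ha r =>
    ⟨fun q hq => ((h q hq).2.2.2 a (ha q hq) r).1, fun q hq => ((h q hq).2.2.2 a (ha q hq) r).2⟩⟩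

lemma prime_contains {R : Type*} [Ring R] (Q : Set (Set R)) (hQfin : Q.Finite)
    (hid : ∀ q ∈ Q, IsIdealSet q) {P : Set R} (hP : IsPrimeIdealSet P)
    (hsub : {r : R | ∀ q ∈ Q, r ∈ q} ⊆ P) : ∃ q ∈ Q, q ⊆ P := by
  revert hid hsub
  induction Q, hQfin using Set.Finite.induction_on with
  | empty =>
      intro _ hsub
      exact absurd (Set.eq_univ_of_univ_subset (fun r _ => hsub (fun q hq => hq.elim)))
        hP.2.1
  | @insert a s ha hs ih =>
      intro hid hsub
      have hA : IsIdealSet a := hid a (Set.mem_insert _ _)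
      have hB : IsIdealSet {r : R | ∀ q ∈ s, r ∈ q} :=
        inter_isIdealSet s (fun q hq => hid q (Set.mem_insert_of_mem _ hq))
      have hmul : ∀ x ∈ a, ∀ y ∈ {r : R | ∀ q ∈ s, r ∈ q}, x * y ∈ P := by
        intro x hx y hy
        apply hsub
        intro q hq
        rcases hq with hq | hq
        · exact hq ▸ (hA.2.2.2 x hx y).2
        · exact (hid q (Set.mem_insert_of_mem _ hq)).2.2.2 y (hy q hq) x |>.1
      rcases hP.2.2 a _ hA hB hmul with h | h
      · exact ⟨a, Set.mem_insert _ _, h⟩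
      · obtain ⟨q, hq, hqP⟩ := ih (fun q hq => hid q (Set.mem_insert_of_mem _ hq)) h
        exact ⟨q, Set.mem_insert_of_mem _ hq, hqP⟩

/-- Let `R` be a semiprime ring with finitely many minimal
primes.  Then `min(R)` is the only irredundant set of prime ideals of `R`:
if `Qs` is a finite set of prime ideals with `⋂_{𝔮 ∈ Qs} 𝔮 = 0` and
`⋂_{𝔮 ∈ Qs ∖ {𝔮'}} 𝔮 ≠ 0` for every `𝔮' ∈ Qs`, then `Qs = min(R)`. -/
theorem statement19 {R : Type*} [Ring R]
    (hR : IsSemiprimeRing R) (hfin : (minPrimes R).Finite)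
    (Qs : Set (Set R)) (hQfin : Qs.Finite)
    (hprime : ∀ q ∈ Qs, IsPrimeIdealSet q)
    (hzero : {r : R | ∀ q ∈ Qs, r ∈ q} = {0})
    (hirr : ∀ q' ∈ Qs, ∃ r : R, r ≠ 0 ∧ ∀ q ∈ Qs, q ≠ q' → r ∈ q) :
    Qs = minPrimes R := by
  have hid : ∀ q ∈ Qs, IsIdealSet q := fun q hq => (hprime q hq).1
  -- every prime contains some element of Qs
  have key : ∀ P : Set R, IsPrimeIdealSet P → ∃ q ∈ Qs, q ⊆ P := by
    intro P hP
    refine prime_contains Qs hQfin hid hP ?_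
    intro r hr
    have h0 : r ∈ ({0} : Set R) := by rw [← hzero]; exact hr
    have : r = 0 := by simpa using h0
    exact this ▸ hP.1.1
  apply Set.eq_of_subset_of_subset
  · -- Qs ⊆ minPrimes
    intro q hq
    refine ⟨hprime q hq, ?_⟩
    intro P' hP' hP'q
    obtain ⟨q'', hq'', hq''P'⟩ := key P' hP'
    have hq''q : q'' ⊆ q := hq''P'.trans hP'q
    have heq : q'' = q := by
      by_contra hne
      obtain ⟨r, hr0, hr⟩ := hirr q hq
      have hrall : ∀ p ∈ Qs, r ∈ p := by
        intro p hp
        by_cases hpq : p = q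
        · exact hpq ▸ hq''q (hr q'' hq'' hne)
        · exact hr p hp hpq
      have hmem : r ∈ {r : R | ∀ p ∈ Qs, r ∈ p} := hrall
      rw [hzero] at hmem
      exact hr0 (by simpa using hmem)
    exact Set.Subset.antisymm hP'q (heq ▸ hq''P')
  · -- minPrimes ⊆ Qs
    intro P hP
    obtain ⟨q, hq, hqP⟩ := key P hP.1
    have := hP.2 q (hprime q hq) hqP
    exact this ▸ hq

end BavulaMinPrimes
end
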